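/- For all real constants a₁, a₂, κ₁, κ₂, the path x(t) = R(t)·(a₁ cos t + a₂ sin t − 1, −a₂ cos t + a₁ sin t − 1/2)ᵀ + (κ₁, κ₂)ᵀ, where R(t) is the rotation matrix by angle t, satisfies the differential equation x''(t) = R(t)·((−1, −1/2)ᵀ + M(t)·x'(t)) with M(t) = ((2 sin t, −2 cos t), (2 cos t, 2 sin t)), for all t ∈ ℝ. -/

import Mathlib

open Real

/-- Rotation of a vector in ℝ² by angle `t`. -/
noncomputable def rot (t : ℝ) (p : ℝ × ℝ) : ℝ × ℝ :=
  (Real.cos t * p.1 - Real.sin t * p.2, Real.sin t * p.1 + Real.cos t * p.2)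

theorem stmt_8 (a₁ a₂ κ₁ κ₂ : ℝ) (x : ℝ → ℝ × ℝ)
    (hx : ∀ t : ℝ, x t =
      rot t (a₁ * cos t + a₂ * sin t - 1, -a₂ * cos t + a₁ * sin t - 1/2) + (κ₁, κ₂)) :
    ∀ t : ℝ,
      deriv (deriv x) t =
        rot t ((-1, -1/2) +
          (2 * sin t * (deriv x t).1 - 2 * cos t * (deriv x t).2,
           2 * cos t * (deriv x t).1 + 2 * sin t * (deriv x t).2)) := by
  have hx' : x = fun t =>
      (a₁ * cos (2*t) + a₂ * sin (2*t) - cos t + sin t / 2 + κ₁,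
       a₁ * sin (2*t) - a₂ * cos (2*t) - sin t - cos t / 2 + κ₂) := by
    funext t
    rw [hx t]
    simp only [rot, Prod.mk_add_mk, Prod.mk.injEq, Real.cos_two_mul, Real.sin_two_mul]
    constructor
    · linear_combination (-a₁) * Real.sin_sq_add_cos_sq t
    · linear_combination a₂ * Real.sin_sq_add_cos_sq t
  have hmul : ∀ t : ℝ, HasDerivAt (fun t : ℝ => 2 * t) 2 t := by
    intro t
    simpa using (hasDerivAt_id t).const_mul 2
  have hcos2 : ∀ t : ℝ, HasDerivAt (fun t : ℝ => cos (2*t)) (-sin (2*t) * 2) t := fun t =>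
    (Real.hasDerivAt_cos (2*t)).comp t (hmul t)
  have hsin2 : ∀ t : ℝ, HasDerivAt (fun t : ℝ => sin (2*t)) (cos (2*t) * 2) t := fun t =>
    (Real.hasDerivAt_sin (2*t)).comp t (hmul t)
  have hd1 : ∀ t : ℝ, HasDerivAt (fun t => a₁ * cos (2*t) + a₂ * sin (2*t) - cos t + sin t / 2 + κ₁)
      (a₁ * (-sin (2*t) * 2) + a₂ * (cos (2*t) * 2) - (-sin t) + cos t / 2) t := fun t =>
    (((((hcos2 t).const_mul a₁).add ((hsin2 t).const_mul a₂)).sub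
      (Real.hasDerivAt_cos t)).add ((Real.hasDerivAt_sin t).div_const 2)).add_const κ₁
  have hd2 : ∀ t : ℝ, HasDerivAt (fun t => a₁ * sin (2*t) - a₂ * cos (2*t) - sin t - cos t / 2 + κ₂)
      (a₁ * (cos (2*t) * 2) - a₂ * (-sin (2*t) * 2) - cos t - (-sin t) / 2) t := fun t =>
    (((((hsin2 t).const_mul a₁).sub ((hcos2 t).const_mul a₂)).sub
      (Real.hasDerivAt_sin t)).sub ((Real.hasDerivAt_cos t).div_const 2)).add_const κ₂
  have hdx : deriv x = fun t =>
      ((a₁ * (-sin (2*t) * 2) + a₂ * (cos (2*t) * 2) - (-sin t) + cos t / 2 : ℝ),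
       (a₁ * (cos (2*t) * 2) - a₂ * (-sin (2*t) * 2) - cos t - (-sin t) / 2 : ℝ)) := by
    funext t
    rw [hx']
    exact ((hd1 t).prodMk (hd2 t)).deriv
  have hdd1 : ∀ t : ℝ, HasDerivAt (fun t => a₁ * (-sin (2*t) * 2) + a₂ * (cos (2*t) * 2) - (-sin t) + cos t / 2)
      ((-(cos (2*t) * 2) * 2) * a₁ + (-sin (2*t) * 2 * 2) * a₂ + cos t + (-sin t) / 2) t := by
    intro t
    have h1 : HasDerivAt (fun t : ℝ => -sin (2*t) * 2) (-(cos (2*t) * 2) * 2) t :=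
      ((hsin2 t).neg.mul_const 2)
    have h2 : HasDerivAt (fun t : ℝ => cos (2*t) * 2) (-sin (2*t) * 2 * 2) t :=
      (hcos2 t).mul_const 2
    have := ((((h1.const_mul a₁).add (h2.const_mul a₂)).sub
      (Real.hasDerivAt_sin t).neg).add ((Real.hasDerivAt_cos t).div_const 2))
    exact this.congr_deriv (by ring)
  have hdd2 : ∀ t : ℝ, HasDerivAt (fun t => a₁ * (cos (2*t) * 2) - a₂ * (-sin (2*t) * 2) - cos t - (-sin t) / 2)
      ((-sin (2*t) * 2 * 2) * a₁ - (-(cos (2*t) * 2) * 2) * a₂ + sin t + cos t / 2) t := by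
    intro t
    have h1 : HasDerivAt (fun t : ℝ => -sin (2*t) * 2) (-(cos (2*t) * 2) * 2) t :=
      ((hsin2 t).neg.mul_const 2)
    have h2 : HasDerivAt (fun t : ℝ => cos (2*t) * 2) (-sin (2*t) * 2 * 2) t :=
      (hcos2 t).mul_const 2
    have := ((((h2.const_mul a₁).sub (h1.const_mul a₂)).sub
      (Real.hasDerivAt_cos t)).sub ((Real.hasDerivAt_sin t).neg.div_const 2))
    exact this.congr_deriv (by ring)
  intro t
  rw [hdx]
  have : deriv (fun t =>
      ((a₁ * (-sin (2*t) * 2) + a₂ * (cos (2*t) * 2) - (-sin t) + cos t / 2 : ℝ),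
       (a₁ * (cos (2*t) * 2) - a₂ * (-sin (2*t) * 2) - cos t - (-sin t) / 2 : ℝ))) t =
      ((-(cos (2*t) * 2) * 2) * a₁ + (-sin (2*t) * 2 * 2) * a₂ + cos t + (-sin t) / 2,
       (-sin (2*t) * 2 * 2) * a₁ - (-(cos (2*t) * 2) * 2) * a₂ + sin t + cos t / 2) :=
    ((hdd1 t).prodMk (hdd2 t)).deriv
  rw [this]
  simp only [rot, Prod.mk_add_mk, Prod.mk.injEq, Real.cos_two_mul, Real.sin_two_mul]
  constructor
  · linear_combination (8*Real.sin t*Real.cos t*a₂ + Real.sin t + 8*Real.cos t^2*a₁ - 2*Real.cos t - 4*a₁) * Real.sin_sq_add_cos_sq t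
  · linear_combination (8*Real.sin t*Real.cos t*a₁ - 2*Real.sin t - 8*Real.cos t^2*a₂ - Real.cos t + 4*a₂) * Real.sin_sq_add_cos_sq t
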